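/- Let I be a monomial ideal of K[t_1,...,t_r] generated by powers of distinct variables, I = (t_{i_1}^{a_1},...,t_{i_p}^{a_p}) with i_1 < ... < i_p and a_k ≥ 1. Then for all n ≥ 1, the set of associated primes of I^n/I^{n+1} is exactly { (t_{i_1},...,t_{i_p}) }. -/

import Mathlib

open MvPolynomial

namespace Stmt11Aux

variable {K : Type*} [Field K] {r p : ℕ}

/-- Exponent vectors of the natural monomial generators of `I ^ m`. -/
def Tset (i : Fin p → Fin r) (a : Fin p → ℕ) (m : ℕ) : Set (Fin r →₀ ℕ) :=
  {d | ∃ c : Fin p → ℕ, (∑ k, c k) = m ∧ d = ∑ k, Finsupp.single (i k) (c k * a k)}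

variable {i : Fin p → Fin r} {a : Fin p → ℕ}

lemma sum_single_apply (hi : Function.Injective i) (v : Fin p → ℕ) (k₀ : Fin p) :
    (∑ k, Finsupp.single (i k) (v k)) (i k₀) = v k₀ := by
  classical
  rw [Finsupp.finset_sum_apply]
  rw [Finset.sum_eq_single k₀ (fun k _ hk => by
    rw [Finsupp.single_apply, if_neg (fun h => hk (hi h))]) (by simp)]
  simp

lemma sum_single_apply_notmem (v : Fin p → ℕ) {j : Fin r} (hj : j ∉ Set.range i) :
    (∑ k, Finsupp.single (i k) (v k)) j = 0 := by
  rw [Finsupp.finset_sum_apply]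
  exact Finset.sum_eq_zero fun k _ => by
    rw [Finsupp.single_apply, if_neg (fun h => hj ⟨k, h⟩)]

lemma Tset_add {m m' : ℕ} {u v : Fin r →₀ ℕ} (hu : u ∈ Tset i a m) (hv : v ∈ Tset i a m') :
    u + v ∈ Tset i a (m + m') := by
  obtain ⟨c, hc, rfl⟩ := hu
  obtain ⟨c', hc', rfl⟩ := hv
  refine ⟨c + c', ?_, ?_⟩
  · rw [← hc, ← hc', ← Finset.sum_add_distrib]
    rfl
  · rw [← Finset.sum_add_distrib]
    refine Finset.sum_congr rfl fun k _ => ?_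
    rw [Pi.add_apply, add_mul, Finsupp.single_add]

lemma Tset_zero_mem {d : Fin r →₀ ℕ} (hd : d ∈ Tset i a 0) : d = 0 := by
  classical
  obtain ⟨c, hc, rfl⟩ := hd
  have hck : ∀ k ∈ Finset.univ, c k = 0 := (Finset.sum_eq_zero_iff).mp hc
  refine Finset.sum_eq_zero fun k _ => ?_
  rw [hck k (Finset.mem_univ k), zero_mul, Finsupp.single_zero]

lemma zero_mem_Tset_zero : (0 : Fin r →₀ ℕ) ∈ Tset i a 0 := by
  refine ⟨0, by simp, ?_⟩
  simp

lemma single_mem_Tset_one (k₀ : Fin p) :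
    Finsupp.single (i k₀) (a k₀) ∈ Tset i a 1 := by
  classical
  refine ⟨fun k => if k = k₀ then 1 else 0, by simp, ?_⟩
  rw [Finset.sum_eq_single k₀ (fun k _ hk => by simp [hk]) (by simp)]
  simp

lemma Tset_succ {m : ℕ} {d : Fin r →₀ ℕ} (hd : d ∈ Tset i a (m + 1)) :
    ∃ u ∈ Tset i a m, ∃ k₀, d = u + Finsupp.single (i k₀) (a k₀) := by
  classical
  obtain ⟨c, hc, rfl⟩ := hd
  have hex : ∃ k₀, c k₀ ≠ 0 := by
    by_contra h
    push_neg at h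
    simp [h] at hc
  obtain ⟨k₀, hk₀⟩ := hex
  set c' : Fin p → ℕ := fun k => if k = k₀ then c k - 1 else c k with hc'def
  have hck : ∀ k, c k = c' k + (if k = k₀ then 1 else 0) := by
    intro k
    by_cases h : k = k₀ <;> simp [hc'def, h] <;> omega
  have hsum : (∑ k, c' k) = m := by
    have : (∑ k, c k) = (∑ k, c' k) + 1 := by
      rw [Finset.sum_congr rfl fun k _ => hck k, Finset.sum_add_distrib]
      congr 1
      simp
    omega
  refine ⟨∑ k, Finsupp.single (i k) (c' k * a k), ⟨c', hsum, rfl⟩, k₀, ?_⟩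
  rw [Finset.sum_congr rfl fun k (_ : k ∈ Finset.univ) =>
    (by rw [hck k, add_mul, Finsupp.single_add] :
      Finsupp.single (i k) (c k * a k)
        = Finsupp.single (i k) (c' k * a k)
          + Finsupp.single (i k) ((if k = k₀ then 1 else 0) * a k))]
  rw [Finset.sum_add_distrib]
  congr 1
  rw [Finset.sum_eq_single k₀ (fun k _ hk => by simp [hk]) (by simp)]
  simp

lemma span_one :
    Ideal.span (Set.range fun k => (X (i k) : MvPolynomial (Fin r) K) ^ a k)
      = Ideal.span ((fun s => monomial s (1 : K)) '' Tset i a 1) := by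
  congr 1
  ext x
  constructor
  · rintro ⟨k, rfl⟩
    exact ⟨Finsupp.single (i k) (a k), single_mem_Tset_one k, (X_pow_eq_monomial).symm⟩
  · rintro ⟨t, ht, rfl⟩
    obtain ⟨u, hu, k₀, rfl⟩ := Tset_succ (m := 0) ht
    rw [Tset_zero_mem hu, zero_add]
    exact ⟨k₀, X_pow_eq_monomial⟩

lemma span_pow (i : Fin p → Fin r) (a : Fin p → ℕ) (m : ℕ) :
    (Ideal.span (Set.range fun k => (X (i k) : MvPolynomial (Fin r) K) ^ a k)) ^ m
      = Ideal.span ((fun s => monomial s (1 : K)) '' Tset i a m) := by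
  induction m with
  | zero =>
    rw [pow_zero, Ideal.one_eq_top]
    symm
    rw [Ideal.eq_top_iff_one]
    apply Ideal.subset_span
    exact ⟨0, zero_mem_Tset_zero, by simp⟩
  | succ m ih =>
    rw [pow_succ, ih, span_one, Ideal.span_mul_span']
    congr 1
    ext x
    constructor
    · rintro ⟨y, ⟨u, hu, rfl⟩, z, ⟨v, hv, rfl⟩, rfl⟩
      exact ⟨u + v, Tset_add hu hv, by simp [monomial_mul]⟩
    · rintro ⟨t, ht, rfl⟩
      obtain ⟨u, hu, k₀, rfl⟩ := Tset_succ ht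
      exact ⟨monomial u 1, ⟨u, hu, rfl⟩,
        monomial (Finsupp.single (i k₀) (a k₀)) 1,
        ⟨Finsupp.single (i k₀) (a k₀), single_mem_Tset_one k₀, rfl⟩,
        by simp [monomial_mul]⟩

lemma mem_pow_iff (m : ℕ) (f : MvPolynomial (Fin r) K) :
    f ∈ (Ideal.span (Set.range fun k => (X (i k) : MvPolynomial (Fin r) K) ^ a k)) ^ m
      ↔ ∀ d ∈ f.support, ∃ t ∈ Tset i a m, t ≤ d := by
  rw [span_pow, mem_ideal_span_monomial_image]

lemma X_pow_n_notmem (hi : Function.Injective i) (ha : ∀ k, 1 ≤ a k) (k₀ : Fin p)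
    {n m : ℕ} (h : n < m) :
    (X (i k₀) : MvPolynomial (Fin r) K) ^ (a k₀ * n)
      ∉ (Ideal.span (Set.range fun k => (X (i k) : MvPolynomial (Fin r) K) ^ a k)) ^ m := by
  rw [mem_pow_iff]
  intro hmem
  have hsupp : (Finsupp.single (i k₀) (a k₀ * n))
      ∈ ((X (i k₀) : MvPolynomial (Fin r) K) ^ (a k₀ * n)).support := by
    rw [support_X_pow]
    simp
  obtain ⟨t, htT, htle⟩ := hmem _ hsupp
  obtain ⟨c, hc, rfl⟩ := htT
  rw [Finsupp.le_def] at htle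
  have hck : ∀ k, k ≠ k₀ → c k = 0 := by
    intro k hk
    have h1 := htle (i k)
    rw [sum_single_apply hi] at h1
    rw [Finsupp.single_apply, if_neg (fun hh => hk (hi hh.symm))] at h1
    rcases Nat.mul_eq_zero.mp (Nat.le_zero.mp h1) with h3 | h3
    · exact h3
    · exact absurd h3 (by have := ha k; omega)
  have hck₀ : c k₀ = m := by
    rw [← hc, Finset.sum_eq_single k₀ (fun k _ hk => hck k hk) (by simp)]
  have h2 := htle (i k₀)
  rw [sum_single_apply hi, Finsupp.single_apply, if_pos rfl, hck₀] at h2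
  have := ha k₀
  nlinarith

lemma exists_support_rho_zero {g : MvPolynomial (Fin r) K}
    (hg : g ∉ Ideal.span (Set.range fun k => (X (i k) : MvPolynomial (Fin r) K))) :
    ∃ e ∈ g.support, ∀ k, e (i k) = 0 := by
  have hset : (Set.range fun k => (X (i k) : MvPolynomial (Fin r) K))
      = (fun s => monomial s (1 : K)) '' (Set.range fun k => Finsupp.single (i k) 1) := by
    ext x
    constructor
    · rintro ⟨k, rfl⟩
      exact ⟨Finsupp.single (i k) 1, ⟨k, rfl⟩, by
        show (monomial (Finsupp.single (i k) 1)) (1 : K) = X (i k)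
        rw [← X_pow_eq_monomial, pow_one]⟩
    · rintro ⟨t, ⟨k, rfl⟩, rfl⟩
      refine ⟨k, ?_⟩
      show X (i k) = (monomial (Finsupp.single (i k) 1)) (1 : K)
      rw [← X_pow_eq_monomial, pow_one]
  rw [hset, mem_ideal_span_monomial_image] at hg
  push_neg at hg
  obtain ⟨e, he, h⟩ := hg
  refine ⟨e, he, fun k => ?_⟩
  have h1 := h (Finsupp.single (i k) 1) ⟨k, rfl⟩
  by_contra h0
  exact h1 (Finsupp.single_le_iff.mpr (Nat.one_le_iff_ne_zero.mpr h0))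

set_option maxHeartbeats 1000000 in
lemma mul_notmem (hi : Function.Injective i) (m : ℕ)
    {f g : MvPolynomial (Fin r) K}
    (hfg : f * g ∈ (Ideal.span (Set.range fun k => (X (i k) : MvPolynomial (Fin r) K) ^ a k)) ^ m)
    (hg : g ∉ Ideal.span (Set.range fun k => (X (i k) : MvPolynomial (Fin r) K))) :
    f ∈ (Ideal.span (Set.range fun k => (X (i k) : MvPolynomial (Fin r) K) ^ a k)) ^ m := by
  classical
  by_contra hf
  rw [mem_pow_iff] at hf hfg
  push_neg at hf
  obtain ⟨d₁, hd₁supp, hd₁⟩ := hf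
  obtain ⟨e₁, he₁supp, he₁⟩ := exists_support_rho_zero hg
  set cov : (Fin r →₀ ℕ) → Prop := fun d => ∃ t ∈ Tset i a m, t ≤ d with hcovdef
  have hcov_add : ∀ d e : Fin r →₀ ℕ, (∀ k, e (i k) = 0) → cov (d + e) → cov d := by
    rintro d e he ⟨t, htT, htle⟩
    refine ⟨t, htT, ?_⟩
    obtain ⟨c, -, rfl⟩ := htT
    rw [Finsupp.le_def] at htle ⊢
    intro j
    by_cases hj : j ∈ Set.range i
    · obtain ⟨k, rfl⟩ := hj
      have := htle (i k)
      rw [Finsupp.add_apply, he k, add_zero] at this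
      exact this
    · rw [sum_single_apply_notmem _ hj]
      exact Nat.zero_le _
  have hcov_mono : ∀ d e, cov d → cov (d + e) := by
    rintro d e ⟨t, htT, htle⟩
    exact ⟨t, htT, htle.trans le_self_add⟩
  -- the order
  let ρ : (Fin r →₀ ℕ) →+ (Fin p →₀ ℕ) := Finsupp.comapDomain.addMonoidHom hi
  have hρ : ∀ (d : Fin r →₀ ℕ) (k : Fin p), ρ d k = d (i k) := fun d k => rfl
  let key : (Fin r →₀ ℕ) → (Lex (Fin p →₀ ℕ) ×ₗ Lex (Fin r →₀ ℕ)) :=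
    fun d => toLex (toLex (ρ d), toLex d)
  have keyadd : ∀ x y, key (x + y) = key x + key y := by
    intro x y
    show toLex (toLex (ρ (x + y)), toLex (x + y)) = _
    rw [map_add]
    rfl
  have keyinj : Function.Injective key := by
    intro x y h
    have h2 : toLex x = toLex y := congrArg (fun t => (ofLex t).2) h
    exact toLex.injective h2
  -- minimal elements
  set D : Finset (Fin r →₀ ℕ) := f.support.filter (fun d => ¬ cov d) with hD
  set E : Finset (Fin r →₀ ℕ) := g.support.filter (fun e => ∀ k, e (i k) = 0) with hE
  obtain ⟨d₀, hd₀D, hd₀min⟩ := D.exists_min_image key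
    ⟨d₁, Finset.mem_filter.mpr ⟨hd₁supp, fun ⟨t, ht, hle⟩ => hd₁ t ht hle⟩⟩
  obtain ⟨e₀, he₀E, he₀min⟩ := E.exists_min_image key
    ⟨e₁, Finset.mem_filter.mpr ⟨he₁supp, he₁⟩⟩
  obtain ⟨hd₀supp, hd₀cov⟩ := Finset.mem_filter.mp hd₀D
  obtain ⟨he₀supp, he₀z⟩ := Finset.mem_filter.mp he₀E
  have hρe₀ : ρ e₀ = 0 := by
    ext k; rw [hρ]; exact he₀z k
  have hncov : ¬ cov (d₀ + e₀) := fun h => hd₀cov (hcov_add _ _ he₀z h)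
  -- the coefficient computation
  have hcoeff : coeff (d₀ + e₀) (f * g) ≠ 0 := by
    rw [coeff_mul]
    rw [Finset.sum_eq_single (d₀, e₀)]
    · exact mul_ne_zero (mem_support_iff.mp hd₀supp) (mem_support_iff.mp he₀supp)
    · rintro ⟨u, v⟩ huv hne
      by_contra h0
      have hu : coeff u f ≠ 0 := left_ne_zero_of_mul h0
      have hv : coeff v g ≠ 0 := right_ne_zero_of_mul h0
      have huveq : u + v = d₀ + e₀ := Finset.HasAntidiagonal.mem_antidiagonal.mp huv
      have hucov : ¬ cov u := fun h => hncov (huveq ▸ hcov_mono u v h)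
      have huD : u ∈ D := Finset.mem_filter.mpr ⟨mem_support_iff.mpr hu, hucov⟩
      have hvz : ∀ k, v (i k) = 0 := by
        by_contra hvz
        push_neg at hvz
        have hρv : ρ v ≠ 0 := by
          obtain ⟨k, hk⟩ := hvz
          intro h
          exact hk (by rw [← hρ, h]; rfl)
        have hsum : ρ u + ρ v = ρ d₀ := by
          rw [← map_add, huveq, map_add, hρe₀, add_zero]
        have hlt : toLex (ρ u) < toLex (ρ d₀) := by
          rw [← hsum]
          have hpos : (0 : Lex (Fin p →₀ ℕ)) < toLex (ρ v) :=
            lt_of_le_of_ne bot_le (Ne.symm (fun h => hρv (toLex.injective h)))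
          calc toLex (ρ u) = toLex (ρ u) + 0 := by rw [add_zero]
            _ < toLex (ρ u) + toLex (ρ v) := by exact add_lt_add_right hpos _
        have hklt : key u < key d₀ := by
          rw [Prod.Lex.lt_iff]
          exact Or.inl hlt
        exact absurd (hd₀min u huD) (not_le.mpr hklt)
      have hvE : v ∈ E := Finset.mem_filter.mpr ⟨mem_support_iff.mpr hv, hvz⟩
      have hkeysum : key u + key v = key d₀ + key e₀ := by
        rw [← keyadd, ← keyadd, huveq]
      have hud : key u = key d₀ := by
        rcases lt_or_eq_of_le (hd₀min u huD) with h | h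
        · exfalso
          have := add_lt_add_of_lt_of_le h (he₀min v hvE)
          rw [hkeysum] at this
          exact lt_irrefl _ this
        · exact h.symm
      have hve : key v = key e₀ := by
        rw [hud] at hkeysum
        exact add_left_cancel hkeysum
      exact hne (by rw [keyinj hud, keyinj hve])
    · simp
  have : cov (d₀ + e₀) := hfg _ (mem_support_iff.mpr hcoeff)
  exact hncov this


end Stmt11Aux


open Stmt11Aux in
/-- If `I = (t_{i_1}^{a_1},…,t_{i_p}^{a_p})` is generated by powers of `p`
distinct variables (`i` strictly increasing, `a_k ≥ 1`, `p ≥ 1`), then for all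
`n ≥ 1`, `Ass(I^n/I^{n+1}) = {(t_{i_1},…,t_{i_p})}`. -/
theorem stmt_11 {K : Type*} [Field K] {r p : ℕ} (hp : 1 ≤ p)
    (i : Fin p → Fin r) (hi : StrictMono i) (a : Fin p → ℕ) (ha : ∀ k, 1 ≤ a k)
    (n : ℕ) (hn : 1 ≤ n) :
    associatedPrimes (MvPolynomial (Fin r) K)
        ((↥((Ideal.span (Set.range fun k => (X (i k) : MvPolynomial (Fin r) K) ^ a k)) ^ n)) ⧸
          (Submodule.comap
            ((Ideal.span (Set.range fun k => (X (i k) : MvPolynomial (Fin r) K) ^ a k)) ^ n).subtype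
            ((Ideal.span (Set.range fun k => (X (i k) : MvPolynomial (Fin r) K) ^ a k)) ^ (n + 1)))) =
      {Ideal.span (Set.range fun k => (X (i k) : MvPolynomial (Fin r) K))} := by
  classical
  have hiinj : Function.Injective i := hi.injective
  set R := MvPolynomial (Fin r) K with hR
  set I : Ideal R := Ideal.span (Set.range fun k => (X (i k) : R) ^ a k) with hI
  set P : Ideal R := Ideal.span (Set.range fun k => (X (i k) : R)) with hP
  set N : Submodule R ↥(I ^ n) := Submodule.comap (I ^ n).subtype (I ^ (n + 1)) with hN
  have huniq : ∀ Q ∈ associatedPrimes R (↥(I ^ n) ⧸ N), Q = P := by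
    rintro Q hQ
    obtain ⟨hQprime, x, hx⟩ := isAssociatedPrime_iff.mp hQ
    obtain ⟨y, rfl⟩ := Submodule.Quotient.mk_surjective N x
    have hmem : ∀ z : R, z ∈ Q ↔ z * (y : R) ∈ I ^ (n + 1) := by
      intro z
      rw [hx, Submodule.mem_colon_singleton, Submodule.mem_bot, ← Submodule.Quotient.mk_smul,
        Submodule.Quotient.mk_eq_zero]
      rw [hN, Submodule.mem_comap]
      show ((z • y : ↥(I ^ n)) : R) ∈ I ^ (n + 1) ↔ _
      rw [Submodule.coe_smul, smul_eq_mul]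
    have hfy : (y : R) ∉ I ^ (n + 1) := by
      intro h
      apply hQprime.ne_top
      rw [Ideal.eq_top_iff_one, hmem, one_mul]
      exact h
    apply le_antisymm
    · intro z hz
      rw [hmem] at hz
      by_contra hzP
      rw [mul_comm] at hz
      exact hfy (mul_notmem hiinj (n + 1) hz hzP)
    · rw [hP, Ideal.span_le]
      rintro _ ⟨k, rfl⟩
      have hk : (X (i k) : R) ^ a k ∈ Q := by
        rw [hmem]
        have h1 : (X (i k) : R) ^ a k ∈ I := by
          rw [hI]; exact Ideal.subset_span ⟨k, rfl⟩
        have h2 : ((y : R)) ∈ I ^ n := y.2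
        have h3 := Ideal.mul_mem_mul h1 h2
        rwa [← pow_succ'] at h3
      exact hQprime.mem_of_pow_mem _ hk
  set k₀ : Fin p := ⟨0, hp⟩ with hk₀
  have hx0 : (X (i k₀) : R) ^ (a k₀ * n) ∈ I ^ n := by
    rw [pow_mul]
    have hmemI : (X (i k₀) : R) ^ a k₀ ∈ I := by
      rw [hI]; exact Ideal.subset_span ⟨k₀, rfl⟩
    exact Ideal.pow_mem_pow hmemI n
  have hx1 : (X (i k₀) : R) ^ (a k₀ * n) ∉ I ^ (n + 1) :=
    X_pow_n_notmem hiinj ha k₀ (Nat.lt_succ_self n)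
  have hnontriv : Nontrivial (↥(I ^ n) ⧸ N) := by
    rw [Submodule.Quotient.nontrivial_iff]
    intro hNt
    apply hx1
    have hm : (⟨_, hx0⟩ : ↥(I ^ n)) ∈ N := hNt ▸ Submodule.mem_top
    rw [hN, Submodule.mem_comap] at hm
    exact hm
  obtain ⟨Q, hQ⟩ := associatedPrimes.nonempty R (↥(I ^ n) ⧸ N)
  have hQP := huniq Q hQ
  ext J
  simp only [Set.mem_singleton_iff]
  exact ⟨fun h => huniq J h, fun h => h ▸ (hQP ▸ hQ)⟩
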